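/- Let n ≥ 2 and, for each signed capacity v on [n], define f_v : ℝ^n → ℝ by f_v(x) = Σ_{∅ ≠ T ⊆ [n]} m_v(T)·(1/|T|)·Σ_{i ∈ T} x_i, where m_v is the Möbius transform of v. Then this family satisfies condition (i) (there exist functions g_T : ℝ^n → ℝ, T ⊆ [n], with f_v = Σ_{T ⊆ [n]} v(T)·g_T for all v) and condition (iii) (f_{v_S}(r x + s·1_{[n]}) = r·f_{v_S}(x) + s for every S ⊆ [n], r > 0, s ∈ ℝ, x ∈ ℝ^n), but it fails condition (ii): there exist a nonempty S ⊆ [n] and x ∈ ℝ^n with x_i = 0 for some i ∈ S and f_{v_S}(x) ≠ 0. -/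

import Mathlib

open Finset

/-- The Choquet-type sum computed with a given permutation `π`:
`∑ i (v({π(i),…,π(n)}) − v({π(i+1),…,π(n)})) x_{π(i)}`. -/
noncomputable def choquetSum {n : ℕ} (v : Finset (Fin n) → ℝ) (π : Equiv.Perm (Fin n))
    (x : Fin n → ℝ) : ℝ :=
  ∑ i : Fin n,
    (v ((Finset.univ.filter fun k => i ≤ k).image π) -
      v ((Finset.univ.filter fun k => i < k).image π)) * x (π i)

/-- The signed (discrete) Choquet integral of `x` w.r.t. the set function `v`,
computed with a sorting permutation of `x`. -/
noncomputable def signedChoquet {n : ℕ} (v : Finset (Fin n) → ℝ) (x : Fin n → ℝ) : ℝ :=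
  choquetSum v (Tuple.sort x) x

/-- Two vectors are comonotonic. -/
def Comonotone' {n : ℕ} (x x' : Fin n → ℝ) : Prop :=
  ∀ i j, 0 ≤ (x i - x j) * (x' i - x' j)

/-- Characteristic (indicator) vector of `S`. -/
def indVec {n : ℕ} (S : Finset (Fin n)) : Fin n → ℝ := fun i => if i ∈ S then 1 else 0

/-- The unanimity game `v_S`. -/
def unanimity {n : ℕ} (S T : Finset (Fin n)) : ℝ := if S ⊆ T then 1 else 0

/-- The Möbius transform of a set function. -/
noncomputable def mobius {n : ℕ} (v : Finset (Fin n) → ℝ) (S : Finset (Fin n)) : ℝ :=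
  ∑ T ∈ S.powerset, (-1 : ℝ) ^ (S.card - T.card) * v T


/-- The family of Möbius-weighted arithmetic means:
`f_v(x) = ∑_{∅ ≠ T ⊆ [n]} m_v(T) (1/|T|) ∑_{i ∈ T} x_i`. -/
noncomputable def wamFamily {n : ℕ} (v : Finset (Fin n) → ℝ) (x : Fin n → ℝ) : ℝ :=
  ∑ T ∈ Finset.univ.powerset.filter (fun T : Finset (Fin n) => T.Nonempty),
    mobius v T * ((T.card : ℝ)⁻¹ * ∑ i ∈ T, x i)

/-- Alternating sum over a powerset. -/
lemma aux_alt_sum {α : Type*} [DecidableEq α] (A : Finset α) :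
    ∑ W ∈ A.powerset, (-1 : ℝ) ^ (A.card - W.card) = if A = ∅ then 1 else 0 := by
  have h1 : ∀ W ∈ A.powerset, (-1 : ℝ) ^ (A.card - W.card)
      = (-1 : ℝ) ^ A.card * (-1 : ℝ) ^ W.card := by
    intro W hW
    have hle : W.card ≤ A.card := card_le_card (mem_powerset.mp hW)
    have : (-1 : ℝ) ^ (A.card - W.card) * (-1 : ℝ) ^ W.card = (-1 : ℝ) ^ A.card := by
      rw [← pow_add]; congr 1; omega
    have h2 : ((-1 : ℝ) ^ W.card) * ((-1 : ℝ) ^ W.card) = 1 := by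
      rw [← pow_add]; exact Even.neg_one_pow ⟨_, rfl⟩
    calc (-1 : ℝ) ^ (A.card - W.card)
        = (-1 : ℝ) ^ (A.card - W.card) * ((-1 : ℝ) ^ W.card * (-1 : ℝ) ^ W.card) := by
          rw [h2, mul_one]
      _ = (-1 : ℝ) ^ A.card * (-1 : ℝ) ^ W.card := by rw [← mul_assoc, this]
  rw [Finset.sum_congr rfl h1, ← mul_sum]
  have h3 : ∑ W ∈ A.powerset, (-1 : ℝ) ^ W.card
      = ((∑ W ∈ A.powerset, (-1 : ℤ) ^ W.card : ℤ) : ℝ) := by push_cast; rfl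
  rw [h3, Finset.sum_powerset_neg_one_pow_card]
  by_cases h : A = ∅
  · simp [h]
  · simp [h]

lemma mobius_unanimity {n : ℕ} (S T : Finset (Fin n)) :
    mobius (unanimity S) T = if T = S then 1 else 0 := by
  unfold mobius unanimity
  rw [show ∀ f : Finset (Fin n) → ℝ, ∑ U ∈ T.powerset, f U * (if S ⊆ U then 1 else 0)
      = ∑ U ∈ T.powerset.filter (fun U => S ⊆ U), f U from fun f => by
    rw [sum_filter]; exact Finset.sum_congr rfl fun U _ => by split <;> simp]
  by_cases hST : S ⊆ T
  · have himg : T.powerset.filter (fun U => S ⊆ U) = ((T \ S).powerset).image (fun W => S ∪ W) := by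
      ext U
      simp only [mem_filter, mem_powerset, mem_image]
      constructor
      · rintro ⟨hUT, hSU⟩
        exact ⟨U \ S, sdiff_subset_sdiff hUT (Finset.Subset.refl S), by
          rw [Finset.union_sdiff_of_subset hSU]⟩
      · rintro ⟨W, hW, rfl⟩
        exact ⟨Finset.union_subset hST (hW.trans sdiff_subset), subset_union_left⟩
    rw [himg, Finset.sum_image ?hinj]
    case hinj =>
      intro W hW W' hW' h
      have hW2 : W ⊆ T \ S := mem_powerset.mp (Finset.mem_coe.mp hW)
      have hW2' : W' ⊆ T \ S := mem_powerset.mp (Finset.mem_coe.mp hW')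
      have dW : Disjoint S W := Finset.disjoint_of_subset_right hW2 disjoint_sdiff
      have dW' : Disjoint S W' := Finset.disjoint_of_subset_right hW2' disjoint_sdiff
      calc W = (S ∪ W) \ S := by rw [Finset.union_sdiff_left, Finset.sdiff_eq_self_of_disjoint dW.symm]
        _ = (S ∪ W') \ S := by rw [show S ∪ W = S ∪ W' from h]
        _ = W' := by rw [Finset.union_sdiff_left, Finset.sdiff_eq_self_of_disjoint dW'.symm]
    have hcard : ∀ W ∈ (T \ S).powerset, T.card - (S ∪ W).card = (T \ S).card - W.card := by
      intro W hW
      have dW : Disjoint S W := Finset.disjoint_of_subset_right (mem_powerset.mp hW) disjoint_sdiff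
      have h1 : (S ∪ W).card = S.card + W.card := Finset.card_union_of_disjoint dW
      have h2 : (T \ S).card = T.card - S.card := Finset.card_sdiff_of_subset hST
      have h3 : S.card ≤ T.card := card_le_card hST
      omega
    rw [Finset.sum_congr rfl (fun W hW => by rw [hcard W hW]), aux_alt_sum]
    have : T \ S = ∅ ↔ T = S := by
      rw [Finset.sdiff_eq_empty_iff_subset]
      exact ⟨fun h => Finset.Subset.antisymm h hST, fun h => h ▸ Finset.Subset.refl T⟩
    simp only [this]
  · have hemp : T.powerset.filter (fun U => S ⊆ U) = ∅ := by
      ext U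
      simp only [mem_filter, mem_powerset, notMem_empty, iff_false, not_and]
      intro hUT hSU
      exact hST (hSU.trans hUT)
    rw [hemp]
    have : T ≠ S := fun h => hST (h ▸ Finset.Subset.refl T)
    simp [this]

lemma wam_unanimity {n : ℕ} (S : Finset (Fin n)) (hS : S.Nonempty) (x : Fin n → ℝ) :
    wamFamily (unanimity S) x = (S.card : ℝ)⁻¹ * ∑ i ∈ S, x i := by
  unfold wamFamily
  rw [Finset.sum_congr rfl (fun T _ => by rw [mobius_unanimity])]
  rw [Finset.sum_eq_single S]
  · simp
  · intro T _ hT; simp [hT]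
  · intro h
    exfalso
    exact h (by simp [mem_filter, mem_powerset, hS])

theorem wamFamily_i_iii_not_ii {n : ℕ} (hn : 2 ≤ n) :
    (∃ g : Finset (Fin n) → (Fin n → ℝ) → ℝ,
        ∀ v : Finset (Fin n) → ℝ, v ∅ = 0 → ∀ x : Fin n → ℝ,
          wamFamily v x = ∑ T : Finset (Fin n), v T * g T x) ∧
    (∀ S : Finset (Fin n), S.Nonempty → ∀ r : ℝ, 0 < r → ∀ s : ℝ,
        ∀ x : Fin n → ℝ,
          wamFamily (unanimity S) (fun i => r * x i + s) =
            r * wamFamily (unanimity S) x + s) ∧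
    (∃ S : Finset (Fin n), S.Nonempty ∧ ∃ x : Fin n → ℝ,
        (∃ i ∈ S, x i = 0) ∧ wamFamily (unanimity S) x ≠ 0) := by
  refine ⟨?_, ?_, ?_⟩
  · -- condition (i)
    set F : Finset (Finset (Fin n)) :=
      Finset.univ.powerset.filter (fun T : Finset (Fin n) => T.Nonempty) with hF
    refine ⟨fun U x => ∑ T ∈ F.filter (fun T => U ⊆ T),
      (-1 : ℝ) ^ (T.card - U.card) * ((T.card : ℝ)⁻¹ * ∑ i ∈ T, x i), fun v _ x => ?_⟩
    unfold wamFamily mobius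
    calc ∑ T ∈ F, (∑ U ∈ T.powerset, (-1 : ℝ) ^ (T.card - U.card) * v U)
          * ((T.card : ℝ)⁻¹ * ∑ i ∈ T, x i)
        = ∑ T ∈ F, ∑ U : Finset (Fin n), (if U ⊆ T then
            v U * ((-1 : ℝ) ^ (T.card - U.card) * ((T.card : ℝ)⁻¹ * ∑ i ∈ T, x i)) else 0) := by
          refine Finset.sum_congr rfl fun T _ => ?_
          rw [Finset.sum_mul]
          rw [show T.powerset = Finset.univ.filter (fun U => U ⊆ T) from by
            ext U; simp [mem_powerset]]
          rw [sum_filter]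
          exact Finset.sum_congr rfl fun U _ => by split <;> ring
      _ = ∑ U : Finset (Fin n), ∑ T ∈ F, (if U ⊆ T then
            v U * ((-1 : ℝ) ^ (T.card - U.card) * ((T.card : ℝ)⁻¹ * ∑ i ∈ T, x i)) else 0) :=
          Finset.sum_comm
      _ = ∑ U : Finset (Fin n), v U * ∑ T ∈ F.filter (fun T => U ⊆ T),
            (-1 : ℝ) ^ (T.card - U.card) * ((T.card : ℝ)⁻¹ * ∑ i ∈ T, x i) := by
          refine Finset.sum_congr rfl fun U _ => ?_
          rw [← Finset.sum_filter, Finset.mul_sum]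
  · -- condition (iii)
    intro S hS r hr s x
    rw [wam_unanimity S hS, wam_unanimity S hS]
    have hcard : (S.card : ℝ) ≠ 0 := by
      simp [Finset.card_ne_zero_of_mem hS.choose_spec]
    rw [Finset.sum_add_distrib, Finset.sum_const, ← Finset.mul_sum]
    field_simp
    ring
  · -- failure of condition (ii)
    have h0 : (0 : ℕ) < n := by omega
    have h1 : (1 : ℕ) < n := by omega
    set i0 : Fin n := ⟨0, h0⟩
    set i1 : Fin n := ⟨1, h1⟩
    have hne : i0 ≠ i1 := by simp [i0, i1, Fin.ext_iff]
    refine ⟨{i0, i1}, ⟨i0, by simp⟩, (fun i => if i = i1 then 1 else 0), ⟨i0, by simp, by simp [hne]⟩, ?_⟩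
    rw [wam_unanimity _ ⟨i0, by simp⟩]
    rw [Finset.sum_pair hne]
    have hcard : ({i0, i1} : Finset (Fin n)).card = 2 := by
      rw [Finset.card_insert_of_notMem (by simp [hne]), Finset.card_singleton]
    rw [hcard]
    simp [hne]
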